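/- For nonnegative vectors x, y of length n with nonincreasing components, x ≺ y if and only if there exists an upper triangular row-stochastic matrix U such that x = yU. -/

import Mathlib

open Finset Matrix

/-- Prefix sum of the first `k` components. -/
def psum {n : ℕ} (x : Fin n → ℝ) (k : ℕ) : ℝ :=
  ∑ i ∈ Finset.filter (fun i : Fin n => (i : ℕ) < k) Finset.univ, x i

/-- `x` is majorized by `y` (both assumed sorted nonincreasingly). -/
def Maj {n : ℕ} (x y : Fin n → ℝ) : Prop :=
  (∀ k, k < n → psum x k ≤ psum y k) ∧ (∑ i, x i) = ∑ i, y i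

/-- An A-transform: for `i < j` and `λ ∈ [0,1]`, replace `x i` by `x i + λ * x j`
and `x j` by `(1 - λ) * x j`. -/
def ATrans {n : ℕ} (x x' : Fin n → ℝ) : Prop :=
  ∃ (i j : Fin n) (lam : ℝ), i < j ∧ 0 ≤ lam ∧ lam ≤ 1 ∧
    x' = Function.update (Function.update x i (x i + lam * x j)) j ((1 - lam) * x j)

/-- A B-transform: for `i < j` and `λ ∈ [0,1]`, replace `y i` by `(1 - λ) * y i`
and `y j` by `y j + λ * y i`. -/
def BTrans {n : ℕ} (y y' : Fin n → ℝ) : Prop :=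
  ∃ (i j : Fin n) (lam : ℝ), i < j ∧ 0 ≤ lam ∧ lam ≤ 1 ∧
    y' = Function.update (Function.update y i ((1 - lam) * y i)) j (y j + lam * y i)

/-- Lower triangular row-stochastic matrix. -/
def LowerRS {n : ℕ} (L : Matrix (Fin n) (Fin n) ℝ) : Prop :=
  (∀ i j, 0 ≤ L i j) ∧ (∀ i j : Fin n, i < j → L i j = 0) ∧ (∀ i, ∑ j, L i j = 1)

/-- Upper triangular row-stochastic matrix. -/
def UpperRS {n : ℕ} (U : Matrix (Fin n) (Fin n) ℝ) : Prop :=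
  (∀ i j, 0 ≤ U i j) ∧ (∀ i j : Fin n, j < i → U i j = 0) ∧ (∀ i, ∑ j, U i j = 1)

lemma psum_zero {n : ℕ} (x : Fin n → ℝ) : psum x 0 = 0 := by simp [psum]

lemma psum_all {n : ℕ} (x : Fin n → ℝ) : psum x n = ∑ i, x i := by
  simp [psum, Fin.is_lt]

lemma psum_succ {n : ℕ} (x : Fin n → ℝ) (i : Fin n) :
    psum x ((i : ℕ) + 1) = psum x i + x i := by
  unfold psum
  rw [show (Finset.filter (fun j : Fin n => (j:ℕ) < (i:ℕ)+1) Finset.univ) =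
      insert i (Finset.filter (fun j : Fin n => (j:ℕ) < (i:ℕ)) Finset.univ) from ?_]
  · rw [Finset.sum_insert (by simp)]; ring
  · ext j
    simp [Nat.lt_succ_iff_lt_or_eq, Fin.ext_iff, or_comm]
    rw [Fin.le_iff_val_le_val, Fin.lt_iff_val_lt_val]; omega

lemma psum_mono {n : ℕ} (x : Fin n → ℝ) (hx : ∀ i, 0 ≤ x i) {k l : ℕ} (h : k ≤ l) :
    psum x k ≤ psum x l := by
  apply Finset.sum_le_sum_of_subset_of_nonneg
  · intro j hj
    simp only [Finset.mem_filter, Finset.mem_univ, true_and] at *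
    omega
  · intro j _ _; exact hx j

lemma psum_nonneg {n : ℕ} (x : Fin n → ℝ) (hx : ∀ i, 0 ≤ x i) (k : ℕ) : 0 ≤ psum x k :=
  Finset.sum_nonneg fun j _ => hx j

lemma clamp_diff (a b z z' : ℝ) (hab : a ≤ b) (hzz : z ≤ z') :
    max a (min b z') - max a (min b z) = max 0 (min b z' - max a z) := by
  simp only [max_def, min_def]
  split_ifs <;> linarith

lemma telescope_sum {n : ℕ} (Z : ℕ → ℝ) (hZ : ∀ k l, k ≤ l → Z k ≤ Z l) (a b : ℝ) (hab : a ≤ b) :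
    ∑ j : Fin n, max 0 (min b (Z ((j:ℕ)+1)) - max a (Z j)) =
      max a (min b (Z n)) - max a (min b (Z 0)) := by
  rw [Fin.sum_univ_eq_sum_range (fun j => max 0 (min b (Z (j+1)) - max a (Z j)))]
  rw [show (fun j => max 0 (min b (Z (j+1)) - max a (Z j))) =
      (fun j => max a (min b (Z (j+1))) - max a (min b (Z j))) from ?_]
  · exact Finset.sum_range_sub (fun k => max a (min b (Z k))) n
  · funext j
    exact (clamp_diff a b (Z j) (Z (j+1)) hab (hZ j (j+1) (by omega))).symm

theorem stmt12 {n : ℕ} (x y : Fin n → ℝ)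
    (hx0 : ∀ i, 0 ≤ x i) (hy0 : ∀ i, 0 ≤ y i)
    (hxs : Antitone x) (hys : Antitone y) :
    Maj x y ↔ ∃ U : Matrix (Fin n) (Fin n) ℝ, UpperRS U ∧ x = Matrix.vecMul y U := by
  constructor
  · rintro ⟨hmaj, hsum⟩
    -- key majorization fact with endpoint: psum x k ≤ psum y k for all k ≤ n
    have hkey : ∀ k : ℕ, k ≤ n → psum x k ≤ psum y k := by
      intro k hk
      rcases lt_or_eq_of_le hk with h | h
      · exact hmaj k h
      · subst h; rw [psum_all, psum_all, hsum]
    set len : Fin n → Fin n → ℝ := fun i j =>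
      max 0 (min (psum y ((i:ℕ)+1)) (psum x ((j:ℕ)+1)) - max (psum y i) (psum x j)) with hlen
    have hlen_nonneg : ∀ i j, 0 ≤ len i j := fun i j => le_max_left _ _
    have hlen_le : ∀ i j, len i j ≤ y i := by
      intro i j
      rw [hlen]
      simp only
      rw [max_le_iff]
      constructor
      · exact hy0 i
      · have h1 : min (psum y ((i:ℕ)+1)) (psum x ((j:ℕ)+1)) ≤ psum y ((i:ℕ)+1) := min_le_left _ _
        have h2 : psum y i ≤ max (psum y i) (psum x j) := le_max_left _ _
        have := psum_succ y i
        linarith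
    -- row sums of len
    have hrow : ∀ i : Fin n, ∑ j, len i j = y i := by
      intro i
      rw [hlen]
      have hab : psum y (i:ℕ) ≤ psum y ((i:ℕ)+1) := psum_mono y hy0 (by omega)
      rw [telescope_sum (psum x) (fun k l h => psum_mono x hx0 h) _ _ hab]
      rw [psum_zero, psum_all]
      have h1 : psum y ((i:ℕ)+1) ≤ ∑ k, x k := by
        rw [← psum_all x, hsum, ← psum_all y] at *
        exact hsum ▸ psum_mono y hy0 (by omega)
      have h2 : 0 ≤ psum y (i:ℕ) := psum_nonneg y hy0 _
      rw [min_eq_left h1, max_eq_right hab, min_eq_right (le_trans h2 hab), max_eq_left h2]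
      · have := psum_succ y i; linarith
    -- column sums of len
    have hcol : ∀ j : Fin n, ∑ i, len i j = x j := by
      intro j
      rw [hlen]
      have hab : psum x (j:ℕ) ≤ psum x ((j:ℕ)+1) := psum_mono x hx0 (by omega)
      have heq : ∑ i : Fin n, max 0 (min (psum y ((i:ℕ)+1)) (psum x ((j:ℕ)+1)) - max (psum y i) (psum x j))
          = ∑ i : Fin n, max 0 (min (psum x ((j:ℕ)+1)) (psum y ((i:ℕ)+1)) - max (psum x j) (psum y i)) := by
        apply Finset.sum_congr rfl
        intro i _
        rw [min_comm (psum y ((i:ℕ)+1)), max_comm (psum y (i:ℕ))]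
      rw [heq, telescope_sum (psum y) (fun k l h => psum_mono y hy0 h) _ _ hab]
      rw [psum_zero]
      have h1 : psum x ((j:ℕ)+1) ≤ psum y n := by
        calc psum x ((j:ℕ)+1) ≤ psum y ((j:ℕ)+1) := hkey _ (by omega)
          _ ≤ psum y n := psum_mono y hy0 (by omega)
      have h2 : 0 ≤ psum x (j:ℕ) := psum_nonneg x hx0 _
      rw [min_eq_left h1, max_eq_right hab, min_eq_right (le_trans h2 hab), max_eq_left h2]
      have := psum_succ x j; linarith
    refine ⟨fun i j => if y i = 0 then (if i = j then 1 else 0) else len i j / y i, ⟨?_, ?_, ?_⟩, ?_⟩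
    · intro i j
      dsimp only
      split_ifs with h1 h2
      · norm_num
      · norm_num
      · exact div_nonneg (hlen_nonneg i j) (hy0 i)
    · intro i j hji
      dsimp only
      split_ifs with h1 h2
      · exact absurd h2 (ne_of_gt hji)
      · rfl
      · rw [div_eq_zero_iff]
        left
        rw [hlen]
        simp only
        rw [max_eq_left]
        have h3 : psum x ((j:ℕ)+1) ≤ psum y (i:ℕ) := by
          calc psum x ((j:ℕ)+1) ≤ psum y ((j:ℕ)+1) := hkey _ (by omega)
            _ ≤ psum y (i:ℕ) := psum_mono y hy0 (by omega)
        have h4 : min (psum y ((i:ℕ)+1)) (psum x ((j:ℕ)+1)) ≤ psum x ((j:ℕ)+1) := min_le_right _ _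
        have h5 : psum y (i:ℕ) ≤ max (psum y i) (psum x j) := le_max_left _ _
        linarith
    · intro i
      dsimp only
      split_ifs with h1
      · simp
      · rw [← Finset.sum_div, hrow, div_self h1]
    · funext j
      simp only [Matrix.vecMul, dotProduct]
      rw [← hcol j]
      apply Finset.sum_congr rfl
      intro i _
      by_cases h1 : y i = 0
      · have h2 : len i j = 0 := le_antisymm (h1 ▸ hlen_le i j) (hlen_nonneg i j)
        simp [h1, h2]
      · simp only [h1, if_false]
        field_simp
  · rintro ⟨U, ⟨hU0, hUt, hUr⟩, hxU⟩
    constructor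
    · intro k hk
      have hx_eq : ∀ j : Fin n, x j = ∑ i, y i * U i j := by
        intro j
        rw [hxU]
        rfl
      unfold psum
      rw [Finset.sum_congr rfl (fun j _ => hx_eq j), Finset.sum_comm]
      have : ∀ i : Fin n, ∑ j ∈ Finset.filter (fun j : Fin n => (j:ℕ) < k) Finset.univ, y i * U i j
          ≤ if (i:ℕ) < k then y i else 0 := by
        intro i
        split_ifs with h
        · calc ∑ j ∈ Finset.filter (fun j : Fin n => (j:ℕ) < k) Finset.univ, y i * U i j
              = y i * ∑ j ∈ Finset.filter (fun j : Fin n => (j:ℕ) < k) Finset.univ, U i j := by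
                rw [Finset.mul_sum]
            _ ≤ y i * 1 := by
                apply mul_le_mul_of_nonneg_left _ (hy0 i)
                rw [← hUr i]
                apply Finset.sum_le_sum_of_subset_of_nonneg (Finset.filter_subset _ _)
                intro j _ _; exact hU0 i j
            _ = y i := mul_one _
        · apply le_of_eq
          apply Finset.sum_eq_zero
          intro j hj
          simp only [Finset.mem_filter, Finset.mem_univ, true_and] at hj
          rw [hUt i j (by omega), mul_zero]
      calc ∑ i : Fin n, ∑ j ∈ Finset.filter (fun j : Fin n => (j:ℕ) < k) Finset.univ, y i * U i j
          ≤ ∑ i : Fin n, if (i:ℕ) < k then y i else 0 := Finset.sum_le_sum fun i _ => this i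
        _ = psum y k := by rw [psum, Finset.sum_filter]
    · have hx_eq : ∀ j : Fin n, x j = ∑ i, y i * U i j := by
        intro j; rw [hxU]; rfl
      rw [Finset.sum_congr rfl (fun j _ => hx_eq j), Finset.sum_comm]
      apply Finset.sum_congr rfl
      intro i _
      rw [← Finset.mul_sum, hUr i, mul_one]
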